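/- Let P_k be defined by P_0=1, P_1(z)=z-an, P_{k+1}(z)=zP_k(z)+a²(n²-k²)/(4k²-1) P_{k-1}(z), and let 𝓛 be the linear functional 𝓛(f) = ∑_{k=1}^n f^{(k-1)}(a) α_k/(k-1)! with α_k = -2^(k-1) a^k binom(n,k). Then 𝓛(P_m²) = (-1)^(m+1) a^(2m+1) binom(n+m, 2m+1) (2m)!!/(2m-1)!! for 0 ≤ m ≤ n-1, and 𝓛(P_m P_j) = 0 for m ≠ j with 0 ≤ m, j ≤ n-1. -/

import Mathlib

lemma dfrel (m : ℕ) : (2*m+1).doubleFactorial = (2*m+1) * (2*m-1).doubleFactorial := by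
  cases m with
  | zero => decide
  | succ m' =>
    have h1 : 2*(m'+1)+1 = (2*m'+1)+2 := by omega
    have h2 : 2*(m'+1)-1 = 2*m'+1 := by omega
    rw [h1, h2, Nat.doubleFactorial_add_two]

lemma lemB (n j : ℕ) :
    j * (n+1).choose (j+2) + 2 * n.choose (j+2) + n.choose (j+1) = n * n.choose (j+1) := by
  rcases le_or_gt n j with h | h
  · rw [Nat.choose_eq_zero_of_lt (by omega), Nat.choose_eq_zero_of_lt (by omega),
      Nat.choose_eq_zero_of_lt (by omega)]
    simp
  · have hr1 : (n+1) * n.choose (j+1) = (n+1).choose (j+2) * (j+2) := by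
      exact_mod_cast Nat.add_one_mul_choose_eq n (j+1)
    have hr2 : n.choose (j+2) * (j+2) = n.choose (j+1) * (n - (j+1)) :=
      Nat.choose_succ_right_eq n (j+1)
    have hj : j + 1 ≤ n := h
    zify [hj] at hr1 hr2 ⊢
    apply mul_right_cancel₀ (b := ((j:ℤ)+2)) (by positivity)
    linear_combination (-(j:ℤ)) * hr1 + 2 * hr2

lemma lemA (n j k' : ℕ) (hn : k'+3 ≤ n) :
    j.descFactorial (k'+2) * (n+k'+2).choose (j+k'+3)
      + 2*(2*k'+3) * ((j+1).descFactorial (k'+1)) * (n+k'+1).choose (j+k'+3)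
      + (2*k'+3) * j.descFactorial (k'+1) * (n+k'+1).choose (j+k'+2)
    = (n-(k'+1))*(n+k'+1) * j.descFactorial k' * (n+k').choose (j+k'+1) := by
  rcases le_or_gt n j with hj | hj
  · rw [Nat.choose_eq_zero_of_lt (by omega), Nat.choose_eq_zero_of_lt (by omega),
      Nat.choose_eq_zero_of_lt (by omega), Nat.choose_eq_zero_of_lt (by omega)]
    simp
  rcases le_or_gt (j+2) (k'+1) with hk | hk
  · rw [Nat.descFactorial_eq_zero_iff_lt.mpr (by omega),
      Nat.descFactorial_eq_zero_iff_lt.mpr (by omega),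
      Nat.descFactorial_eq_zero_iff_lt.mpr (by omega),
      Nat.descFactorial_eq_zero_iff_lt.mpr (by omega)]
    simp
  rcases eq_or_lt_of_le (show k' ≤ j by omega) with hjk | hjk
  · -- j = k'
    rw [← hjk] at hj ⊢
    rw [Nat.descFactorial_eq_zero_iff_lt.mpr (show k' < k'+2 by omega),
      Nat.descFactorial_eq_zero_iff_lt.mpr (show k' < k'+1 by omega),
      Nat.descFactorial_self, Nat.descFactorial_self, Nat.factorial_succ]
    have e1 : (n+k'+1).choose (k'+k'+3) * (k'+k'+3)
        = (n+k'+1).choose (k'+k'+2) * ((n+k'+1) - (k'+k'+2)) :=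
      Nat.choose_succ_right_eq (n+k'+1) (k'+k'+2)
    have e2 : (n+k'+1) * (n+k').choose (k'+k'+1) = (n+k'+1).choose (k'+k'+2) * (k'+k'+2) := by
      exact_mod_cast Nat.add_one_mul_choose_eq (n+k') (k'+k'+1)
    have h1 : k'+k'+2 ≤ n+k'+1 := by omega
    have h2 : k'+1 ≤ n := by omega
    zify [h1, h2] at e1 e2 ⊢
    linear_combination 2*((k':ℤ)+1)*(Nat.factorial k') * e1 - ((n:ℤ)-(k'+1))*(Nat.factorial k') * e2
  · -- k' < j ≤ n-1 : generic case
    rw [Nat.succ_descFactorial_succ j k']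
    rw [show (k'+2) = (k'+1)+1 from rfl, Nat.descFactorial_succ, Nat.descFactorial_succ]
    have hd0 : k' ≤ j := by omega
    have hd1 : k'+1 ≤ j := hjk
    have hd2 : j+1 ≤ n := hj
    have hd3 : k'+1 ≤ n := by omega
    have rC1 : (n+k'+1) * (n+k').choose (j+k'+1) = (n+k'+1).choose (j+k'+2) * (j+k'+2) := by
      exact_mod_cast Nat.add_one_mul_choose_eq (n+k') (j+k'+1)
    have rC2 : (n+k'+1).choose (j+k'+3) * (j+k'+3)
        = (n+k'+1).choose (j+k'+2) * ((n+k'+1) - (j+k'+2)) :=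
      Nat.choose_succ_right_eq (n+k'+1) (j+k'+2)
    have rC3 : (n+k'+2) * (n+k'+1).choose (j+k'+2) = (n+k'+2).choose (j+k'+3) * (j+k'+3) := by
      exact_mod_cast Nat.add_one_mul_choose_eq (n+k'+1) (j+k'+2)
    have hq1 : ((j:ℚ)+k'+2) ≠ 0 := by positivity
    have hq2 : ((j:ℚ)+k'+3) ≠ 0 := by positivity
    have h4 : j+k'+2 ≤ n+k'+1 := by omega
    have goalQ : ((j:ℚ) - (k'+1)) * ((j:ℚ) - k') * (j.descFactorial k') * ((n+k'+2).choose (j+k'+3))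
        + 2*(2*(k':ℚ)+3) * ((j:ℚ)+1) * (j.descFactorial k') * ((n+k'+1).choose (j+k'+3))
        + (2*(k':ℚ)+3) * ((j:ℚ) - k') * (j.descFactorial k') * ((n+k'+1).choose (j+k'+2))
        = ((n:ℚ)-(k'+1))*((n:ℚ)+k'+1) * (j.descFactorial k') * ((n+k').choose (j+k'+1)) := by
      have hC1 : ((n+k'+1).choose (j+k'+2) : ℚ)
          = ((n:ℚ)+k'+1) * ((n+k').choose (j+k'+1)) / ((j:ℚ)+k'+2) := by
        rw [eq_div_iff hq1]; exact_mod_cast congrArg (Nat.cast (R := ℚ)) rC1.symm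
      have hC2 : ((n+k'+1).choose (j+k'+3) : ℚ)
          = ((n+k'+1).choose (j+k'+2) : ℚ) * ((n:ℚ) - (j+1)) / ((j:ℚ)+k'+3) := by
        rw [eq_div_iff hq2]
        have h4' : j+k'+1 ≤ n+k' := by omega
        have hcast := congrArg (Nat.cast (R := ℚ)) rC2
        push_cast [Nat.cast_sub h4, Nat.cast_sub h4'] at hcast
        push_cast
        linear_combination hcast
      have hC3 : ((n+k'+2).choose (j+k'+3) : ℚ)
          = ((n:ℚ)+k'+2) * ((n+k'+1).choose (j+k'+2)) / ((j:ℚ)+k'+3) := by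
        rw [eq_div_iff hq2]; exact_mod_cast congrArg (Nat.cast (R := ℚ)) rC3.symm
      rw [hC3, hC2, hC1]
      field_simp
      ring
    refine Nat.cast_inj (R := ℚ) |>.mp ?_
    push_cast [Nat.cast_sub hd0, Nat.cast_sub hd1, Nat.cast_sub hd3]
    linear_combination goalQ

open Polynomial in
theorem orthogonality_of_P (n : ℕ) (hn : 0 < n) (a : ℂ) (ha : a ≠ 0)
    (α : ℕ → ℂ)
    (hα : ∀ k, 1 ≤ k → k ≤ n → α k = -(2 : ℂ) ^ (k - 1) * a ^ k * (n.choose k : ℂ))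
    (L : Polynomial ℂ → ℂ)
    (hL : ∀ p : Polynomial ℂ, L p = ∑ k ∈ Finset.Icc 1 n,
      (Polynomial.eval a ((Polynomial.derivative)^[k - 1] p)) * α k / (Nat.factorial (k - 1) : ℂ))
    (P : ℕ → Polynomial ℂ)
    (hP0 : P 0 = 1)
    (hP1 : P 1 = Polynomial.X - Polynomial.C (a * n))
    (hPrec : ∀ k : ℕ, 1 ≤ k → k ≤ n - 1 →
      P (k + 1) = Polynomial.X * P k +
        Polynomial.C (a ^ 2 * ((n : ℂ) ^ 2 - (k : ℂ) ^ 2) /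
          ((2 * (k : ℂ) - 1) * (2 * (k : ℂ) + 1))) * P (k - 1)) :
    (∀ m : ℕ, m ≤ n - 1 →
      L (P m * P m) = (-1 : ℂ) ^ (m + 1) * a ^ (2 * m + 1) *
        ((n + m).choose (2 * m + 1) : ℂ) *
        (Nat.doubleFactorial (2 * m) : ℂ) / (Nat.doubleFactorial (2 * m - 1) : ℂ)) ∧
    (∀ m j : ℕ, m ≤ n - 1 → j ≤ n - 1 → m ≠ j → L (P m * P j) = 0) := by
  -- iterated derivative is additive
  have itadd : ∀ (k : ℕ) (p q : Polynomial ℂ),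
      derivative^[k] (p + q) = derivative^[k] p + derivative^[k] q := by
    intro k
    induction k with
    | zero => intro p q; simp
    | succ k ihk =>
      intro p q
      rw [Function.iterate_succ_apply, Function.iterate_succ_apply,
        Function.iterate_succ_apply, derivative_add, ihk]
  -- L is additive
  have hLadd : ∀ p q : Polynomial ℂ, L (p + q) = L p + L q := by
    intro p q
    rw [hL, hL, hL, ← Finset.sum_add_distrib]
    refine Finset.sum_congr rfl fun k _ => ?_
    rw [itadd, eval_add]
    ring
  -- L commutes with scalar multiplication by constants
  have hLC : ∀ (c : ℂ) (p : Polynomial ℂ), L (C c * p) = c * L p := by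
    intro c p
    rw [hL, hL, Finset.mul_sum]
    refine Finset.sum_congr rfl fun k _ => ?_
    rw [iterate_derivative_C_mul, eval_mul, eval_C]
    ring
  have hL0 : L 0 = 0 := by
    have := hLC 0 0
    simpa using this
  have hLsum : ∀ (s : Finset ℕ) (f : ℕ → Polynomial ℂ),
      L (∑ i ∈ s, f i) = ∑ i ∈ s, L (f i) := by
    intro s f
    induction s using Finset.induction_on with
    | empty => simpa using hL0
    | insert _ _ hx ih => rw [Finset.sum_insert hx, Finset.sum_insert hx, hLadd, ih]
  -- moments in the basis (X - C a)^j
  have hnu : ∀ j : ℕ, L ((X - C a)^j) =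
      -(2:ℂ)^j * a^(j+1) * (n.choose (j+1) : ℂ) := by
    intro j
    rw [hL]
    have hterm : ∀ k ∈ Finset.Icc 1 n,
        eval a (derivative^[k-1] ((X - C a)^j)) * α k / ((k-1).factorial : ℂ)
        = if k = j+1 then -(2:ℂ)^j * a^(j+1) * (n.choose (j+1) : ℂ) else 0 := by
      intro k hk
      rw [Finset.mem_Icc] at hk
      rw [iterate_derivative_X_sub_pow]
      rw [nsmul_eq_mul, eval_mul, eval_natCast, eval_pow, eval_sub, eval_X, eval_C, sub_self]
      by_cases hkj : k = j+1
      · subst hkj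
        simp only [if_true]
        rw [show j+1-1 = j from rfl, Nat.sub_self, pow_zero, Nat.descFactorial_self,
          hα (j+1) (by omega) (by omega)]
        have hfac : ((j.factorial : ℂ)) ≠ 0 := Nat.cast_ne_zero.mpr (Nat.factorial_ne_zero j)
        field_simp
        rw [Nat.add_sub_cancel]
        ring
      · rw [if_neg hkj]
        rcases lt_or_ge (k-1) j with h | h
        · rw [zero_pow (by omega)]
          ring
        · have : j < k - 1 := by omega
          rw [Nat.descFactorial_eq_zero_iff_lt.mpr this]
          simp
    rw [Finset.sum_congr rfl hterm, Finset.sum_ite_eq' (Finset.Icc 1 n) (j+1)]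
    by_cases hjn : j+1 ≤ n
    · rw [if_pos (Finset.mem_Icc.mpr ⟨by omega, hjn⟩)]
    · rw [if_neg (by simp [Finset.mem_Icc]; omega),
        Nat.choose_eq_zero_of_lt (by omega)]
      ring
  -- the key closed form: (2k-1)!! * L((X-a)^j * P k) = (-1)^(k+1) 2^j a^(j+k+1) (j)_k C(n+k, j+k+1)
  have key : ∀ k, k ≤ n-1 → ∀ j : ℕ,
      (((2*k-1).doubleFactorial : ℕ) : ℂ) * L ((X - C a)^j * P k)
        = (-1:ℂ)^(k+1) * 2^j * a^(j+k+1) * ((j.descFactorial k : ℕ) : ℂ)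
            * (((n+k).choose (j+k+1) : ℕ) : ℂ) := by
    intro k
    induction k using Nat.strong_induction_on with
    | _ k ih =>
      match k with
      | 0 =>
        intro _ j
        rw [hP0, mul_one, hnu]
        simp [Nat.doubleFactorial]
        try ring
      | 1 =>
        intro hk1 j
        have hsplit : (X - C a)^j * P 1 = (X - C a)^(j+1) + C (a - a*(n:ℂ)) * (X - C a)^j := by
          rw [hP1, C_sub]; ring
        rw [hsplit, hLadd, hLC, hnu, hnu]
        have castB : (j:ℂ) * ((n+1).choose (j+2) : ℕ) + 2 * ((n.choose (j+2) : ℕ) : ℂ)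
            + ((n.choose (j+1) : ℕ) : ℂ) = (n:ℂ) * ((n.choose (j+1) : ℕ) : ℂ) := by
          exact_mod_cast congrArg (Nat.cast (R := ℂ)) (lemB n j)
        have hd1 : ((j.descFactorial 1 : ℕ) : ℂ) = (j : ℂ) := by
          rw [Nat.descFactorial_one]
        have hdf : (((2*1-1).doubleFactorial : ℕ) : ℂ) = 1 := by norm_num [Nat.doubleFactorial]
        rw [hdf, hd1]
        have h1 : ((n+1 : ℕ) : ℂ) = (n:ℂ)+1 := by push_cast; ring
        have hch : (((n+1).choose (j+1+1) : ℕ) : ℂ) = (((n+1).choose (j+2) : ℕ) : ℂ) := rfl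
        linear_combination (-(2:ℂ)^j * a^(j+2)) * castB
      | (k'+2) =>
        intro hk j
        -- recurrence from hPrec with k = k'+1
        have hrec := hPrec (k'+1) (by omega) (by omega)
        set c : ℂ := a ^ 2 * ((n : ℂ) ^ 2 - ((k'+1 : ℕ) : ℂ) ^ 2) /
          ((2 * ((k'+1 : ℕ) : ℂ) - 1) * (2 * ((k'+1 : ℕ) : ℂ) + 1)) with hc_def
        have hsplit : (X - C a)^j * P (k'+2) =
            (X - C a)^(j+1) * P (k'+1) + C a * ((X - C a)^j * P (k'+1))
              + C c * ((X - C a)^j * P k') := by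
          rw [show k'+2 = (k'+1)+1 from rfl, hrec]
          rw [show k'+1-1 = k' from rfl]
          ring
        have e1 := ih (k'+1) (by omega) (by omega) (j+1)
        have e2 := ih (k'+1) (by omega) (by omega) j
        have e3 := ih k' (by omega) (by omega) j
        -- double factorial relations
        have hDF3 : ((2*(k'+2)-1).doubleFactorial : ℕ)
            = (2*k'+3) * ((2*(k'+1)-1).doubleFactorial : ℕ) := by
          have := dfrel (k'+1)
          rw [show 2*(k'+2)-1 = 2*(k'+1)+1 by omega] at *
          rw [this]
          congr 1 <;> omega
        have hDF2 : ((2*(k'+1)-1).doubleFactorial : ℕ)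
            = (2*k'+1) * ((2*k'-1).doubleFactorial : ℕ) := by
          have := dfrel k'
          rw [show 2*(k'+1)-1 = 2*k'+1 by omega, this]
        -- the coefficient identity
        have hnz1 : ((2*k'+1 : ℕ) : ℂ) ≠ 0 := Nat.cast_ne_zero.mpr (by omega)
        have hnz3 : ((2*k'+3 : ℕ) : ℂ) ≠ 0 := Nat.cast_ne_zero.mpr (by omega)
        have hc : ((2*k'+3 : ℕ) : ℂ) * ((2*k'+1 : ℕ) : ℂ) * c
            = a^2 * ((n:ℂ)^2 - ((k'+1 : ℕ) : ℂ)^2) := by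
          have hzD : ((2 * ((k'+1 : ℕ) : ℂ) - 1) * (2 * ((k'+1 : ℕ) : ℂ) + 1)) ≠ 0 := by
            have hD : (2 * ((k'+1 : ℕ) : ℂ) - 1) * (2 * ((k'+1 : ℕ) : ℂ) + 1)
                = ((2*k'+1 : ℕ) : ℂ) * ((2*k'+3 : ℕ) : ℂ) := by push_cast; ring
            rw [hD]; exact mul_ne_zero hnz1 hnz3
          calc ((2*k'+3 : ℕ) : ℂ) * ((2*k'+1 : ℕ) : ℂ) * c
              = (a^2 * ((n:ℂ)^2 - ((k'+1 : ℕ) : ℂ)^2)) /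
                  ((2 * ((k'+1 : ℕ) : ℂ) - 1) * (2 * ((k'+1 : ℕ) : ℂ) + 1)) *
                  ((2 * ((k'+1 : ℕ) : ℂ) - 1) * (2 * ((k'+1 : ℕ) : ℂ) + 1)) := by
                rw [hc_def]; push_cast; ring
            _ = a^2 * ((n:ℂ)^2 - ((k'+1 : ℕ) : ℂ)^2) := div_mul_cancel₀ _ hzD
        -- cast of lemA
        have hA := lemA n j k' (by omega)
        have hA' : ((j.descFactorial (k'+2) : ℕ) : ℂ) * (((n+k'+2).choose (j+k'+3) : ℕ) : ℂ)
            + 2*(2*(k':ℂ)+3) * (((j+1).descFactorial (k'+1) : ℕ) : ℂ) * (((n+k'+1).choose (j+k'+3) : ℕ) : ℂ)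
            + (2*(k':ℂ)+3) * ((j.descFactorial (k'+1) : ℕ) : ℂ) * (((n+k'+1).choose (j+k'+2) : ℕ) : ℂ)
            = ((n:ℂ)-(k'+1))*((n:ℂ)+k'+1) * ((j.descFactorial k' : ℕ) : ℂ)
                * (((n+k').choose (j+k'+1) : ℕ) : ℂ) := by
          have := congrArg (Nat.cast (R := ℂ)) hA
          push_cast [Nat.cast_sub (show k'+1 ≤ n by omega)] at this
          push_cast
          linear_combination this
        rw [hsplit, hLadd, hLadd, hLC, hLC]
        rw [hDF3, hDF2]
        rw [hDF2] at e1 e2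
        push_cast at e1 e2 e3 hA' hc ⊢
        simp only [show n+(k'+1) = n+k'+1 by ring, show n+(k'+2) = n+k'+2 by ring,
          show j+1+(k'+1)+1 = j+k'+3 by ring, show j+(k'+1)+1 = j+k'+2 by ring,
          show j+(k'+2)+1 = j+k'+3 by ring, show j+k'+1+1 = j+k'+2 by ring,
          show j+1+k'+1+1 = j+k'+3 by ring, show j+k'+2+1 = j+k'+3 by ring] at e1 e2 e3 hA' ⊢
        linear_combination (2*(k':ℂ)+3) * e1 + (2*(k':ℂ)+3) * a * e2
          + (((2*k'-1).doubleFactorial : ℕ) : ℂ) * (L ((X - C a)^j * P k')) * hc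
          + (a^2 * ((n:ℂ)^2 - ((k':ℂ)+1)^2)) * e3
          - ((-1:ℂ)^(k'+1) * 2^j * a^(j+k'+3)) * hA'
  -- monicity and degree of P m
  have hmon : ∀ m, m ≤ n-1 → (P m).Monic ∧ (P m).natDegree = m := by
    intro m
    induction m using Nat.strong_induction_on with
    | _ m ih =>
      match m with
      | 0 => intro _; rw [hP0]; exact ⟨monic_one, natDegree_one⟩
      | 1 => intro _; rw [hP1]; exact ⟨monic_X_sub_C _, natDegree_X_sub_C _⟩
      | (k'+2) =>
        intro hm
        have hrec := hPrec (k'+1) (by omega) (by omega)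
        obtain ⟨hm1, hd1⟩ := ih (k'+1) (by omega) (by omega)
        obtain ⟨hm0, hd0⟩ := ih k' (by omega) (by omega)
        rw [show k'+2 = (k'+1)+1 from rfl, hrec, show k'+1-1 = k' from rfl]
        have hmx : (X * P (k'+1)).Monic := monic_X.mul hm1
        have hdx : (X * P (k'+1)).natDegree = k'+2 := by
          rw [natDegree_mul X_ne_zero hm1.ne_zero, natDegree_X, hd1]
          omega
        have hdegx : (X * P (k'+1)).degree = ((k'+2 : ℕ) : WithBot ℕ) := by
          rw [degree_eq_natDegree hmx.ne_zero, hdx]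
        have hq : degree (C (a ^ 2 * ((n : ℂ) ^ 2 - ((k'+1:ℕ) : ℂ) ^ 2) /
              ((2 * ((k'+1:ℕ) : ℂ) - 1) * (2 * ((k'+1:ℕ) : ℂ) + 1))) * P k')
            < (X * P (k'+1)).degree := by
          rw [hdegx]
          refine lt_of_le_of_lt (degree_mul_le _ _) ?_
          refine lt_of_le_of_lt (add_le_add degree_C_le (degree_le_natDegree)) ?_
          rw [hd0, zero_add]
          exact_mod_cast (by omega : k' < k'+2)
        constructor
        · exact hmx.add_of_left hq
        · have hdeg : degree (X * P (k'+1) + C (a ^ 2 * ((n : ℂ) ^ 2 - ((k'+1:ℕ) : ℂ) ^ 2) /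
              ((2 * ((k'+1:ℕ) : ℂ) - 1) * (2 * ((k'+1:ℕ) : ℂ) + 1))) * P k')
              = ((k'+2 : ℕ) : WithBot ℕ) := by
            rw [degree_add_eq_left_of_degree_lt hq, hdegx]
          exact natDegree_eq_of_degree_eq_some hdeg
  have hDFne : ∀ m : ℕ, (((2*m-1).doubleFactorial : ℕ) : ℂ) ≠ 0 :=
    fun m => Nat.cast_ne_zero.mpr (Nat.doubleFactorial_pos _).ne'
  -- expansion via Taylor coefficients at a
  have hexp : ∀ (q : Polynomial ℂ) (m : ℕ), L (q * P m)
      = ∑ i ∈ (taylor a q).support, (taylor a q).coeff i * L ((X - C a)^i * P m) := by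
    intro q m
    conv_lhs => rw [← sum_taylor_eq q a]
    rw [Polynomial.sum_def, Finset.sum_mul, hLsum]
    refine Finset.sum_congr rfl fun i _ => ?_
    rw [mul_assoc, hLC]
  -- vanishing below the diagonal
  have hvan : ∀ m, m ≤ n-1 → ∀ i, i < m → L ((X - C a)^i * P m) = 0 := by
    intro m hm i him
    have hk := key m hm i
    rw [Nat.descFactorial_eq_zero_iff_lt.mpr him] at hk
    push_cast at hk
    rw [mul_zero, zero_mul] at hk
    rcases mul_eq_zero.mp hk with h | h
    · exact absurd h (hDFne m)
    · exact h
  have hzero : ∀ m j, m ≤ n-1 → j ≤ n-1 → j < m → L (P m * P j) = 0 := by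
    intro m j hm hj hjm
    rw [mul_comm, hexp (P j) m]
    apply Finset.sum_eq_zero
    intro i hi
    have hideg : i ≤ j := by
      have := le_natDegree_of_mem_supp i hi
      rwa [natDegree_taylor, (hmon j hj).2] at this
    rw [hvan m hm i (by omega), mul_zero]
  constructor
  · -- diagonal
    intro m hm
    have hcoeff : (taylor a (P m)).coeff m = 1 := by
      have h1 : (taylor a (P m)).natDegree = m := by
        rw [natDegree_taylor, (hmon m hm).2]
      have h2 : (taylor a (P m)).leadingCoeff = 1 := by
        rw [taylor_apply, leadingCoeff_comp (by rw [natDegree_X_add_C]; omega)]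
        rw [(hmon m hm).1.leadingCoeff, leadingCoeff_X_add_C]
        simp
      have h3 : ((taylor a) (P m)).coeff m = ((taylor a) (P m)).leadingCoeff := by
        rw [Polynomial.leadingCoeff, h1]
      rw [h3, h2]
    rw [hexp (P m) m]
    have hms : m ∈ (taylor a (P m)).support := by
      rw [mem_support_iff, hcoeff]; exact one_ne_zero
    rw [Finset.sum_eq_single_of_mem m hms (fun b hb hbm => by
      have hbdeg : b ≤ m := by
        have := le_natDegree_of_mem_supp b hb
        rwa [natDegree_taylor, (hmon m hm).2] at this
      rw [hvan m hm b (by omega), mul_zero])]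
    rw [hcoeff, one_mul]
    have hk := key m hm m
    rw [Nat.descFactorial_self, show m+m+1 = 2*m+1 by ring] at hk
    rw [eq_div_iff (hDFne m)]
    rw [Nat.doubleFactorial_two_mul]
    push_cast at hk ⊢
    linear_combination hk
  · -- off-diagonal
    intro m j hm hj hmj
    rcases lt_or_gt_of_ne hmj with h | h
    · rw [show P m * P j = P j * P m from mul_comm _ _]
      exact hzero j m hj hm h
    · exact hzero m j hm hj h
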